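/- Let k be a field of characteristic zero and n ≥ 3. Let g be the n-dimensional Lie algebra over k with basis f₁,…,f_n and brackets [f_i,f_j] = 6(j−i)·f_{i+j} whenever 1 ≤ i ≤ j and i+j ≤ n, and [f_i,f_j] = 0 whenever i+j > n. Then for every i ≥ 1 the i-th term of the derived series of g is the span of f_{2^{i+1}−1}, f_{2^{i+1}}, …, f_n (which is zero when 2^{i+1}−1 > n). Consequently g is k-step solvable exactly when 2^k ≤ n+1 < 2^{k+1}. -/

import Mathlib

/-- Key bracket computation: if an ideal's underlying submodule is the span of the
basis vectors `f a` with `t ≤ a`, then the bracket ideal's submodule is the span of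
those with `2t+2 ≤ a`. -/
private theorem filiform_aux
    {k g : Type*} [Field k] [CharZero k] [LieRing g] [LieAlgebra k g]
    {n : ℕ} (f : Module.Basis (Fin n) k g)
    (hbr : ∀ i j : Fin n, ⁅f i, f j⁆ =
      if h : (i : ℕ) + (j : ℕ) + 2 ≤ n
      then (6 * ((j : ℕ) : k) - 6 * ((i : ℕ) : k)) • f ⟨(i : ℕ) + (j : ℕ) + 1, by linarith⟩
      else 0)
    (I : LieIdeal k g) (t : ℕ)
    (hI : (I : Submodule k g) = Submodule.span k (f '' {a : Fin n | t ≤ (a : ℕ)})) :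
    ((⁅I, I⁆ : LieIdeal k g) : Submodule k g)
      = Submodule.span k (f '' {a : Fin n | 2 * t + 2 ≤ (a : ℕ)}) := by
  have hbase : ∀ a b : Fin n, t ≤ (a : ℕ) → t ≤ (b : ℕ) →
      ⁅f a, f b⁆ ∈ Submodule.span k (f '' {a : Fin n | 2 * t + 2 ≤ (a : ℕ)}) := by
    intro a b ha hb
    rw [hbr a b]
    split_ifs with h
    · rcases eq_or_ne (a : ℕ) (b : ℕ) with hab | hab
      · simp [hab]
      · refine Submodule.smul_mem _ _ (Submodule.subset_span ⟨⟨(a : ℕ) + (b : ℕ) + 1, by omega⟩, ?_, rfl⟩)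
        show 2 * t + 2 ≤ (a : ℕ) + (b : ℕ) + 1
        omega
    · exact Submodule.zero_mem _
  have hmain : ∀ x ∈ Submodule.span k (f '' {a : Fin n | t ≤ (a : ℕ)}),
      ∀ y ∈ Submodule.span k (f '' {a : Fin n | t ≤ (a : ℕ)}),
      ⁅x, y⁆ ∈ Submodule.span k (f '' {a : Fin n | 2 * t + 2 ≤ (a : ℕ)}) := by
    intro x hx
    induction hx using Submodule.span_induction with
    | mem x hx =>
      obtain ⟨a, ha, rfl⟩ := hx
      intro y hy
      induction hy using Submodule.span_induction with
      | mem y hy =>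
        obtain ⟨b, hb, rfl⟩ := hy
        exact hbase a b ha hb
      | zero => simp
      | add y z _ _ hy hz => rw [lie_add]; exact Submodule.add_mem _ hy hz
      | smul c y _ hy => rw [lie_smul]; exact Submodule.smul_mem _ _ hy
    | zero => intro y hy; simp
    | add x z _ _ hx hz =>
      intro y hy; rw [add_lie]; exact Submodule.add_mem _ (hx y hy) (hz y hy)
    | smul c x _ hx =>
      intro y hy; rw [smul_lie]; exact Submodule.smul_mem _ _ (hx y hy)
  simp only [LieIdeal.toLieSubalgebra_toSubmodule] at hI ⊢
  apply le_antisymm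
  · rw [LieSubmodule.lieIdeal_oper_eq_linear_span']
    refine Submodule.span_le.mpr ?_
    rintro z ⟨x, hx, y, hy, rfl⟩
    exact hmain x (by rw [← hI]; exact hx) y (by rw [← hI]; exact hy)
  · refine Submodule.span_le.mpr ?_
    rintro z ⟨a, (ha : 2 * t + 2 ≤ (a : ℕ)), rfl⟩
    have han : (a : ℕ) < n := a.isLt
    set b1 : Fin n := ⟨t, by omega⟩ with hb1
    set b2 : Fin n := ⟨(a : ℕ) - 1 - t, by omega⟩ with hb2
    have hcond : (b1 : ℕ) + (b2 : ℕ) + 2 ≤ n := by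
      show t + ((a : ℕ) - 1 - t) + 2 ≤ n; omega
    have hbrv : ⁅f b1, f b2⁆ = (6 * ((b2 : ℕ) : k) - 6 * ((b1 : ℕ) : k)) • f a := by
      rw [hbr b1 b2, dif_pos hcond]
      congr 1
      exact congrArg f (Fin.ext (show t + ((a : ℕ) - 1 - t) + 1 = (a : ℕ) by omega))
    have hne : (6 * ((b2 : ℕ) : k) - 6 * ((b1 : ℕ) : k)) ≠ 0 := by
      have h12 : (b1 : ℕ) < (b2 : ℕ) := by show t < (a : ℕ) - 1 - t; omega
      have hre : (6 * ((b2 : ℕ) : k) - 6 * ((b1 : ℕ) : k))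
          = ((6 * (b2 : ℕ) : ℕ) : k) - ((6 * (b1 : ℕ) : ℕ) : k) := by push_cast; ring
      rw [hre, sub_ne_zero]
      intro h
      exact (by omega : 6 * (b2 : ℕ) ≠ 6 * (b1 : ℕ)) (Nat.cast_injective h)
    have hb1m : f b1 ∈ I := by
      rw [← LieSubmodule.mem_toSubmodule, hI]
      exact Submodule.subset_span ⟨b1, le_refl t, rfl⟩
    have hb2m : f b2 ∈ I := by
      rw [← LieSubmodule.mem_toSubmodule, hI]
      exact Submodule.subset_span ⟨b2, by show t ≤ (a : ℕ) - 1 - t; omega, rfl⟩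
    have hmem : ⁅f b1, f b2⁆ ∈ ((⁅I, I⁆ : LieIdeal k g) : LieSubmodule k g g) :=
      LieSubmodule.lie_mem_lie hb1m hb2m
    have : f a = (6 * ((b2 : ℕ) : k) - 6 * ((b1 : ℕ) : k))⁻¹ • ⁅f b1, f b2⁆ := by
      rw [hbrv, inv_smul_smul₀ hne]
    rw [this]
    exact Submodule.smul_mem _ _ hmem

/-- Let `k` be a field of characteristic zero, `n ≥ 3`, and let `g`
be the `n`-dimensional Lie algebra with basis `f₁, …, f_n` and brackets
`[f_i, f_j] = 6(j−i)·f_{i+j}` for `i+j ≤ n` and `[f_i, f_j] = 0` for `i+j > n`.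
Then for every `i ≥ 1` the `i`-th term of the derived series of `g` is the span of
`f_{2^{i+1}−1}, …, f_n` (zero when `2^{i+1}−1 > n`); consequently `g` is `m`-step
solvable exactly when `2^m ≤ n+1 < 2^{m+1}`.  (Here `f` is indexed by `Fin n`, so
the basis vector `f_{a+1}` is `f a`, and `f_{a+1}` belongs to the span exactly when
`2^{i+1} ≤ a + 2`.) -/
theorem filiform_derivedSeries
    {k g : Type*} [Field k] [CharZero k] [LieRing g] [LieAlgebra k g]
    (n : ℕ) (hn : 3 ≤ n) (f : Module.Basis (Fin n) k g)
    (hbr : ∀ i j : Fin n, ⁅f i, f j⁆ =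
      if h : (i : ℕ) + (j : ℕ) + 2 ≤ n
      then (6 * ((j : ℕ) : k) - 6 * ((i : ℕ) : k)) • f ⟨(i : ℕ) + (j : ℕ) + 1, by omega⟩
      else 0) :
    (∀ i : ℕ, 1 ≤ i →
      (LieAlgebra.derivedSeries k g i : Submodule k g)
        = Submodule.span k (f '' {a : Fin n | 2 ^ (i + 1) ≤ (a : ℕ) + 2})) ∧
    (∀ m : ℕ,
      (LieAlgebra.derivedSeries k g m = ⊥ ∧ LieAlgebra.derivedSeries k g (m - 1) ≠ ⊥)
        ↔ (2 ^ m ≤ n + 1 ∧ n + 1 < 2 ^ (m + 1))) := by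
  -- the spans `S t`
  have hset : ∀ i : ℕ, {a : Fin n | 2 ^ (i + 1) ≤ (a : ℕ) + 2} = {a : Fin n | 2 ^ (i + 1) - 2 ≤ (a : ℕ)} := by
    intro i
    have h2 : 2 ≤ 2 ^ (i + 1) := Nat.one_lt_two_pow_iff.mpr (by omega)
    ext a; simp only [Set.mem_setOf_eq]; omega
  have htop : ((⊤ : LieIdeal k g) : Submodule k g)
      = Submodule.span k (f '' {a : Fin n | 0 ≤ (a : ℕ)}) := by
    have h1 : f '' {a : Fin n | 0 ≤ (a : ℕ)} = Set.range f := by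
      ext x; simp
    rw [h1, f.span_eq, LieIdeal.toLieSubalgebra_toSubmodule, LieSubmodule.top_toSubmodule]
  have key1 : ∀ i : ℕ, (LieAlgebra.derivedSeries k g (i + 1) : Submodule k g)
      = Submodule.span k (f '' {a : Fin n | 2 ^ (i + 2) - 2 ≤ (a : ℕ)}) := by
    intro i
    induction i with
    | zero =>
      have := filiform_aux f hbr ⊤ 0 htop
      rw [LieAlgebra.derivedSeries_def, LieAlgebra.derivedSeriesOfIdeal_succ,
        LieAlgebra.derivedSeriesOfIdeal_zero]
      convert this using 4
      norm_num
    | succ j ih =>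
      have := filiform_aux f hbr (LieAlgebra.derivedSeries k g (j + 1)) (2 ^ (j + 2) - 2) ih
      rw [LieAlgebra.derivedSeries_def, LieAlgebra.derivedSeriesOfIdeal_succ,
        ← LieAlgebra.derivedSeries_def]
      rw [this]
      congr 2
      have h2 : 2 ≤ 2 ^ (j + 2) := Nat.one_lt_two_pow_iff.mpr (by omega)
      have hp : 2 ^ (j + 3) = 2 * 2 ^ (j + 2) := by ring
      have : 2 * (2 ^ (j + 2) - 2) + 2 = 2 ^ (j + 3) - 2 := by omega
      rw [this]
  have part1 : ∀ i : ℕ, 1 ≤ i →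
      (LieAlgebra.derivedSeries k g i : Submodule k g)
        = Submodule.span k (f '' {a : Fin n | 2 ^ (i + 1) ≤ (a : ℕ) + 2}) := by
    intro i hi
    obtain ⟨j, rfl⟩ : ∃ j, i = j + 1 := ⟨i - 1, by omega⟩
    rw [key1 j, hset (j + 1)]
  refine ⟨part1, ?_⟩
  -- characterization of when the spans vanish
  have hbot : ∀ t : ℕ, Submodule.span k (f '' {a : Fin n | t ≤ (a : ℕ)}) = ⊥ ↔ n ≤ t := by
    intro t
    constructor
    · intro h
      by_contra h'
      push_neg at h'
      have hmem : f ⟨t, h'⟩ ∈ Submodule.span k (f '' {a : Fin n | t ≤ (a : ℕ)}) :=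
        Submodule.subset_span ⟨⟨t, h'⟩, le_refl t, rfl⟩
      rw [h, Submodule.mem_bot] at hmem
      exact f.ne_zero _ hmem
    · intro h
      have : f '' {a : Fin n | t ≤ (a : ℕ)} = ∅ := by
        ext x
        simp only [Set.mem_image, Set.mem_setOf_eq, Set.mem_empty_iff_false, iff_false]
        rintro ⟨a, ha, rfl⟩
        exact absurd ha (by have := a.isLt; omega)
      rw [this, Submodule.span_empty]
  have hDbot : ∀ m : ℕ, 1 ≤ m →
      (LieAlgebra.derivedSeries k g m = ⊥ ↔ n + 1 < 2 ^ (m + 1)) := by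
    intro m hm
    obtain ⟨j, rfl⟩ : ∃ j, m = j + 1 := ⟨m - 1, by omega⟩
    rw [← LieSubmodule.toSubmodule_eq_bot, ← LieIdeal.toLieSubalgebra_toSubmodule,
      key1 j, hbot]
    have h2 : 2 ≤ 2 ^ (j + 2) := Nat.one_lt_two_pow_iff.mpr (by omega)
    have he : 2 ^ (j + 1 + 1) = 2 ^ (j + 2) := by ring
    rw [he]
    generalize hq : (2 : ℕ) ^ (j + 2) = q at h2 ⊢
    omega
  have htopne : (⊤ : LieIdeal k g) ≠ ⊥ := by
    intro h
    have : f ⟨0, by omega⟩ ∈ (⊥ : LieIdeal k g) := h ▸ LieSubmodule.mem_top _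
    rw [LieSubmodule.mem_bot] at this
    exact f.ne_zero _ this
  intro m
  match m with
  | 0 =>
    simp only [LieAlgebra.derivedSeries_def, LieAlgebra.derivedSeriesOfIdeal_zero]
    constructor
    · rintro ⟨h, -⟩; exact absurd h htopne
    · rintro ⟨-, h⟩; exact absurd h (by omega)
  | 1 =>
    rw [show (1 : ℕ) - 1 = 0 from rfl]
    simp only [LieAlgebra.derivedSeries_def, LieAlgebra.derivedSeriesOfIdeal_zero]
    rw [← LieAlgebra.derivedSeries_def]
    constructor
    · rintro ⟨h, -⟩
      refine ⟨by omega, ?_⟩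
      exact (hDbot 1 le_rfl).mp h
    · rintro ⟨-, h⟩
      exact ⟨(hDbot 1 le_rfl).mpr h, htopne⟩
  | (j + 2) =>
    rw [show (j + 2 : ℕ) - 1 = j + 1 from rfl]
    have hne : LieAlgebra.derivedSeries k g (j + 1) ≠ ⊥ ↔ 2 ^ (j + 2) ≤ n + 1 := by
      rw [Ne, hDbot (j + 1) (by omega)]
      have he : 2 ^ (j + 1 + 1) = 2 ^ (j + 2) := by ring
      rw [he]
      omega
    constructor
    · rintro ⟨h1, h2⟩
      exact ⟨hne.mp h2, (hDbot (j + 2) (by omega)).mp h1⟩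
    · rintro ⟨h1, h2⟩
      exact ⟨(hDbot (j + 2) (by omega)).mpr h2, hne.mpr h1⟩
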